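/- Let S = {x_1, ..., x_n} be a gcd-closed set of distinct positive integers and let a be a positive integer. Then the determinant of the n×n matrix [S^a] with (i,j)-entry lcm(x_i, x_j)^a equals Π_{k=1}^n x_k^{2a} β_{a,k}, where β_{a,k} = Σ_{d | x_k, d ∤ x_t for all x_t < x_k in S} ((1/ξ_a) * μ)(d) and (1/ξ_a)(x) = x^{-a}. -/

import Mathlib

open ArithmeticFunction Finset

namespace Stmt5Aux

/-- `g a d = ∑_{e ∣ d} e^{-a} μ(d/e)`, i.e. `(1/ξ_a) * μ`. -/
noncomputable def g (a d : ℕ) : ℚ := ∑ e ∈ d.divisors, ((e : ℚ) ^ a)⁻¹ * (ArithmeticFunction.moebius (d / e))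

lemma sum_g (a : ℕ) {m : ℕ} (hm : 0 < m) :
    ∑ d ∈ m.divisors, g a d = ((m : ℚ) ^ a)⁻¹ := by
  refine (ArithmeticFunction.sum_eq_iff_sum_mul_moebius_eq
      (f := g a) (g := fun m => ((m : ℚ) ^ a)⁻¹)).mpr ?_ m hm
  intro d hd
  rw [Nat.sum_divisorsAntidiagonal' (f := fun c e => (ArithmeticFunction.moebius c : ℚ) * ((e : ℚ) ^ a)⁻¹)]
  exact Finset.sum_congr rfl fun e he => mul_comm _ _

/-- the set of divisors of `x k` dividing no smaller element of `S` -/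
def Ak {n : ℕ} (x : Fin n → ℕ) (k : Fin n) : Finset ℕ :=
  (x k).divisors.filter (fun d => ∀ t, x t < x k → ¬ d ∣ x t)

noncomputable def β {n : ℕ} (a : ℕ) (x : Fin n → ℕ) (k : Fin n) : ℚ :=
  ∑ d ∈ Ak x k, g a d

lemma cover {n : ℕ} (x : Fin n → ℕ) (hpos : ∀ i, 0 < x i)
    (hgcd : ∀ i j, ∃ k, x k = Nat.gcd (x i) (x j))
    {m : ℕ} (hm : 0 < m) (k0 : Fin n) (hk0 : x k0 = m) :
    ((univ.filter fun k => x k ∣ m).biUnion (Ak x)) = m.divisors := by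
  ext d
  simp only [mem_biUnion, mem_filter, mem_univ, true_and, Ak, Nat.mem_divisors]
  constructor
  · rintro ⟨k, hk, ⟨hd, -⟩, -⟩
    exact ⟨hd.trans hk, hm.ne'⟩
  · rintro ⟨hdm, -⟩
    obtain ⟨k, hk, hmin⟩ := (univ.filter fun k => x k ∣ m ∧ d ∣ x k).exists_min_image x
      ⟨k0, by simp [hk0, hdm]⟩
    simp only [mem_filter, mem_univ, true_and] at hk hmin
    refine ⟨k, hk.1, ⟨⟨hk.2, (hpos k).ne'⟩, ?_⟩⟩
    intro t ht hdt
    obtain ⟨s, hs⟩ := hgcd t k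
    have hsm : x s ∣ m := (hs ▸ Nat.gcd_dvd_right (x t) (x k)).trans hk.1
    have hds : d ∣ x s := hs ▸ Nat.dvd_gcd hdt hk.2
    have h1 := hmin s (by simp [hsm, hds])
    have hsx : x s ≤ x t := Nat.le_of_dvd (hpos t) (hs ▸ Nat.gcd_dvd_left (x t) (x k))
    omega

lemma disj {n : ℕ} (x : Fin n → ℕ) (hinj : Function.Injective x)
    (hpos : ∀ i, 0 < x i) (hgcd : ∀ i j, ∃ k, x k = Nat.gcd (x i) (x j))
    (s : Finset (Fin n)) : Set.PairwiseDisjoint ↑s (Ak x) := by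
  intro k _ k' _ hkk'
  rw [Function.onFun, Finset.disjoint_left]
  intro d hd hd'
  simp only [Ak, mem_filter, Nat.mem_divisors] at hd hd'
  obtain ⟨s, hs⟩ := hgcd k k'
  have hds : d ∣ x s := hs ▸ Nat.dvd_gcd hd.1.1 hd'.1.1
  have hsk : x s ≤ x k := Nat.le_of_dvd (hpos k) (hs ▸ Nat.gcd_dvd_left _ _)
  rcases lt_or_eq_of_le hsk with h | h
  · exact hd.2 s h hds
  · have hkk : x k ∣ x k' := by
      have h2 := hs ▸ Nat.gcd_dvd_right (x k) (x k'); rwa [h] at h2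
    have : x k < x k' := lt_of_le_of_ne (Nat.le_of_dvd (hpos k') hkk)
      (fun he => hkk' (hinj he))
    exact hd'.2 k this hd.1.1

lemma sum_over {n : ℕ} (a : ℕ) (x : Fin n → ℕ) (hinj : Function.Injective x)
    (hpos : ∀ i, 0 < x i) (hgcd : ∀ i j, ∃ k, x k = Nat.gcd (x i) (x j))
    {m : ℕ} (hm : 0 < m) (k0 : Fin n) (hk0 : x k0 = m) :
    ∑ k ∈ univ.filter (fun k => x k ∣ m), β a x k = ((m : ℚ) ^ a)⁻¹ := by
  simp only [β]
  rw [← Finset.sum_biUnion (disj x hinj hpos hgcd _), cover x hpos hgcd hm k0 hk0,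
    sum_g a hm]

lemma detL {n : ℕ} (x : Fin n → ℕ) (hinj : Function.Injective x)
    (hpos : ∀ i, 0 < x i) :
    (Matrix.of fun i k : Fin n => if x k ∣ x i then (1 : ℚ) else 0).det = 1 := by
  have hmono : StrictMono (x ∘ Tuple.sort x) :=
    (Tuple.monotone_sort x).strictMono_of_injective (hinj.comp (Tuple.sort x).injective)
  rw [← Matrix.det_submatrix_equiv_self (Tuple.sort x)]
  have htri : ((Matrix.of fun i k : Fin n => if x k ∣ x i then (1 : ℚ) else 0).submatrix
      (Tuple.sort x) (Tuple.sort x)).BlockTriangular OrderDual.toDual := by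
    intro i j hij
    have hij' : i < j := hij
    simp only [Matrix.submatrix_apply, Matrix.of_apply, ite_eq_right_iff]
    intro hdvd
    exact absurd (Nat.le_of_dvd (hpos _) hdvd) (not_le.mpr (hmono hij'))
  rw [Matrix.det_of_lowerTriangular _ htri]
  simp

theorem main {n : ℕ} (a : ℕ) (x : Fin n → ℕ) (hinj : Function.Injective x)
    (hpos : ∀ i, 0 < x i) (hgcd : ∀ i j, ∃ k, x k = Nat.gcd (x i) (x j)) :
    (Matrix.of fun i j : Fin n => ((Nat.lcm (x i) (x j) : ℚ)) ^ a).det =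
      ∏ k : Fin n, (x k : ℚ) ^ (2 * a) * β a x k := by
  set L : Matrix (Fin n) (Fin n) ℚ :=
    Matrix.of fun i k : Fin n => if x k ∣ x i then (1 : ℚ) else 0 with hL
  set P : Matrix (Fin n) (Fin n) ℚ :=
    Matrix.of fun i k : Fin n => (x i : ℚ) ^ a * (β a x k * L i k) with hP
  set Q : Matrix (Fin n) (Fin n) ℚ :=
    Matrix.of fun k j : Fin n => (x j : ℚ) ^ a * L j k with hQ
  have hxQ : ∀ i, ((x i : ℚ)) ≠ 0 := fun i => Nat.cast_ne_zero.mpr (hpos i).ne'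
  have hMPQ : (Matrix.of fun i j : Fin n => ((Nat.lcm (x i) (x j) : ℚ)) ^ a) = P * Q := by
    ext i j
    simp only [Matrix.mul_apply, hP, hQ, hL, Matrix.of_apply]
    have hstep : ∀ k : Fin n,
        (x i : ℚ) ^ a * (β a x k * if x k ∣ x i then (1:ℚ) else 0) *
          ((x j : ℚ) ^ a * if x k ∣ x j then (1:ℚ) else 0) =
        (x i : ℚ) ^ a * (x j : ℚ) ^ a *
          (if x k ∣ x i ∧ x k ∣ x j then β a x k else 0) := by
      intro k
      by_cases h1 : x k ∣ x i <;> by_cases h2 : x k ∣ x j <;>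
        simp [h1, h2] <;> ring
    rw [Finset.sum_congr rfl fun k _ => hstep k, ← Finset.mul_sum,
      ← Finset.sum_filter]
    obtain ⟨k0, hk0⟩ := hgcd i j
    have hgpos : 0 < Nat.gcd (x i) (x j) := Nat.gcd_pos_of_pos_left _ (hpos i)
    have hfilt : (univ.filter fun k => x k ∣ x i ∧ x k ∣ x j) =
        (univ.filter fun k => x k ∣ Nat.gcd (x i) (x j)) := by
      apply Finset.filter_congr
      intro k _
      simp [Nat.dvd_gcd_iff]
    rw [hfilt, sum_over a x hinj hpos hgcd hgpos k0 hk0]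
    have hlg : ((Nat.gcd (x i) (x j) : ℚ)) * ((Nat.lcm (x i) (x j) : ℚ)) =
        (x i : ℚ) * (x j : ℚ) := by
      rw [← Nat.cast_mul, Nat.gcd_mul_lcm, Nat.cast_mul]
    have hg0 : ((Nat.gcd (x i) (x j) : ℚ)) ≠ 0 := Nat.cast_ne_zero.mpr hgpos.ne'
    field_simp
    rw [← mul_pow, ← mul_pow, mul_comm ((Nat.lcm (x i) (x j) : ℚ)), hlg]
  rw [hMPQ, Matrix.det_mul]
  have hdetL : L.det = 1 := detL x hinj hpos
  have hdetP : P.det = (∏ i, (x i : ℚ) ^ a) * ((∏ k, β a x k) * L.det) := by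
    calc P.det = (Matrix.of fun i j : Fin n => (x i : ℚ) ^ a *
          (Matrix.of fun i k : Fin n => β a x k * L i k) i j).det := rfl
      _ = (∏ i, (x i : ℚ) ^ a) *
          (Matrix.of fun i k : Fin n => β a x k * L i k).det :=
        Matrix.det_mul_column _ _
      _ = (∏ i, (x i : ℚ) ^ a) * ((∏ k, β a x k) * L.det) := by
        rw [Matrix.det_mul_row (fun k => β a x k) L]
  have hdetQ : Q.det = (∏ j, (x j : ℚ) ^ a) * L.transpose.det := by
    calc Q.det = (Matrix.of fun k j : Fin n => (x j : ℚ) ^ a *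
          L.transpose k j).det := rfl
      _ = (∏ j, (x j : ℚ) ^ a) * L.transpose.det :=
        Matrix.det_mul_row _ _
  rw [hdetP, hdetQ, hdetL, Matrix.det_transpose, hdetL]
  have h2a : (∏ k : Fin n, (x k : ℚ) ^ (2 * a) * β a x k) =
      ((∏ k : Fin n, (x k : ℚ) ^ a) * ∏ k : Fin n, (x k : ℚ) ^ a) *
        ∏ k : Fin n, β a x k := by
    rw [← Finset.prod_mul_distrib, ← Finset.prod_mul_distrib]
    refine Finset.prod_congr rfl fun k _ => ?_
    rw [two_mul, pow_add]
  rw [h2a]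
  ring

end Stmt5Aux

theorem stmt_5 (n : ℕ) (hn : 0 < n) (a : ℕ) (ha : 0 < a)
    (x : Fin n → ℕ) (hinj : Function.Injective x) (hpos : ∀ i, 0 < x i)
    (hgcd : ∀ i j, ∃ k, x k = Nat.gcd (x i) (x j)) :
    (Matrix.of fun i j : Fin n => ((Nat.lcm (x i) (x j) : ℚ)) ^ a).det =
      ∏ k : Fin n, (x k : ℚ) ^ (2 * a) *
        ∑ d ∈ (x k).divisors.filter (fun d => ∀ t, x t < x k → ¬ d ∣ x t),
          ∑ e ∈ d.divisors, ((e : ℚ) ^ a)⁻¹ * (ArithmeticFunction.moebius (d / e)) := by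
  have h := Stmt5Aux.main a x hinj hpos hgcd
  simpa [Stmt5Aux.β, Stmt5Aux.g, Stmt5Aux.Ak] using h
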